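/- Let (Q(ℓ))_{ℓ≥0} be a stochastic process with Q ∈ W^{1,1}(0, L_max) almost surely, and let L be a nonnegative random variable independent of the process with P(L ≥ ℓ) > 0 for all ℓ ∈ [0, L_max]. Then the continuous level Monte Carlo estimator (1/N) Σ_{k=1}^N ∫_0^{L_max} (1/P(L ≥ ℓ)) (dQ/dℓ)^{(k)}(ℓ) 1_{[0, L^{(k)}]}(ℓ) dℓ, built from N i.i.d. samples, has expectation equal to E[Q(L_max) − Q(0)]. -/

import Mathlib

open MeasureTheory ProbabilityTheory Real ENNReal

/-- Unbiasedness of the CLMC estimator (Proposition 2.1): for a stochastic process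
`Q(ℓ)` with `Q ∈ W^{1,1}(0, L_max)` a.s. (encoded by the a.s. fundamental-theorem
representation via the weak derivative `dQ` and finite expected `L¹` norm), a
nonnegative random level `L` independent of the process with `P(L ≥ ℓ) > 0` on
`[0, L_max]`, and `N` i.i.d. samples, the CLMC estimator has expectation
`E[Q(L_max) − Q(0)]`. -/
theorem clmc_estimator_unbiased {Ω : Type*} [MeasurableSpace Ω] (μ : Measure Ω)
    [IsProbabilityMeasure μ] (N : ℕ) (hN : 0 < N) (Lmax : ℝ) (hLmax : 0 < Lmax)
    (Q dQ : Ω → ℝ → ℝ) (L : Ω → ℝ)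
    (hdQm : Measurable fun p : Ω × ℝ => dQ p.1 p.2) (hLm : Measurable L)
    (hL0 : ∀ ω, 0 ≤ L ω)
    (hpos : ∀ ℓ ∈ Set.Icc (0 : ℝ) Lmax, 0 < μ {ω | ℓ ≤ L ω})
    (hindep : IndepFun (fun ω => (Q ω, dQ ω)) L μ)
    (hW11 : ∀ᵐ ω ∂μ, IntegrableOn (dQ ω) (Set.Ioc 0 Lmax) ∧
      Q ω Lmax - Q ω 0 = ∫ ℓ in Set.Ioc (0 : ℝ) Lmax, dQ ω ℓ)
    (hint : (∫⁻ ω, (∫⁻ ℓ in Set.Ioc (0 : ℝ) Lmax, ‖dQ ω ℓ‖₊) ∂μ) < ⊤)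
    (dQk : Fin N → Ω → ℝ → ℝ) (Lk : Fin N → Ω → ℝ)
    (hkm : ∀ k, Measurable fun p : Ω × ℝ => dQk k p.1 p.2)
    (hLkm : ∀ k, Measurable (Lk k))
    (hiid : ∀ k, IdentDistrib (fun ω => (dQk k ω, Lk k ω))
      (fun ω => (dQ ω, L ω)) μ μ) :
    ∫ ω, ((N : ℝ)⁻¹ * ∑ k, ∫ ℓ in Set.Ioc (0 : ℝ) Lmax,
        (Set.Icc 0 (Lk k ω)).indicator
          (fun ℓ' => dQk k ω ℓ' / (μ {ω' | ℓ' ≤ L ω'}).toReal) ℓ) ∂μ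
      = ∫ ω, (Q ω Lmax - Q ω 0) ∂μ := by
  classical
  have hμL : ∀ ℓ : ℝ, MeasurableSet {ω | ℓ ≤ L ω} := fun ℓ =>
    measurableSet_le measurable_const hLm
  set p : ℝ → ℝ := fun ℓ => (μ {ω' | ℓ ≤ L ω'}).toReal with hpdef
  set ν : Measure ℝ := volume.restrict (Set.Ioc (0 : ℝ) Lmax) with hνdef
  have hpm : Measurable p := by
    apply Measurable.ennreal_toReal
    apply Antitone.measurable
    intro a b hab
    exact measure_mono fun ω hω => le_trans hab hω
  have hc : 0 < p Lmax :=
    ENNReal.toReal_pos (hpos Lmax ⟨hLmax.le, le_refl _⟩).ne' (measure_ne_top μ _)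
  have hcle : ∀ ℓ ∈ Set.Ioc (0 : ℝ) Lmax, p Lmax ≤ p ℓ := by
    intro ℓ hℓ
    exact ENNReal.toReal_mono (measure_ne_top μ _)
      (measure_mono fun ω hω => le_trans hℓ.2 hω)
  have hppos : ∀ ℓ ∈ Set.Ioc (0 : ℝ) Lmax, 0 < p ℓ := fun ℓ hℓ =>
    lt_of_lt_of_le hc (hcle ℓ hℓ)
  -- identical distribution at a fixed level ℓ
  have hev : ∀ (k : Fin N) (ℓ : ℝ), IdentDistrib
      (fun ω => (dQk k ω ℓ, Lk k ω)) (fun ω => (dQ ω ℓ, L ω)) μ μ := fun k ℓ =>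
    (hiid k).comp (((measurable_pi_apply ℓ).comp measurable_fst).prodMk measurable_snd)
  have hnrm : ∀ (k : Fin N) (ℓ : ℝ),
      ∫⁻ ω, (‖dQk k ω ℓ‖₊ : ℝ≥0∞) ∂μ = ∫⁻ ω, (‖dQ ω ℓ‖₊ : ℝ≥0∞) ∂μ := fun k ℓ =>
    ((hev k ℓ).comp (measurable_fst.nnnorm.coe_nnreal_ennreal)).lintegral_eq
  -- Tonelli bookkeeping
  have hdQnm : Measurable fun q : Ω × ℝ => (‖dQ q.1 q.2‖₊ : ℝ≥0∞) :=
    hdQm.nnnorm.coe_nnreal_ennreal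
  have hswapdQ : ∫⁻ ℓ, (∫⁻ ω, (‖dQ ω ℓ‖₊ : ℝ≥0∞) ∂μ) ∂ν
      = ∫⁻ ω, (∫⁻ ℓ, (‖dQ ω ℓ‖₊ : ℝ≥0∞) ∂ν) ∂μ :=
    (lintegral_lintegral_swap hdQnm.aemeasurable).symm
  have hKdQ : ∫⁻ ℓ, (∫⁻ ω, (‖dQ ω ℓ‖₊ : ℝ≥0∞) ∂μ) ∂ν < ⊤ := by
    rw [hswapdQ]; exact hint
  have hKk : ∀ k : Fin N, ∫⁻ ω, (∫⁻ ℓ, (‖dQk k ω ℓ‖₊ : ℝ≥0∞) ∂ν) ∂μ < ⊤ := by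
    intro k
    have hm : Measurable fun q : Ω × ℝ => (‖dQk k q.1 q.2‖₊ : ℝ≥0∞) :=
      (hkm k).nnnorm.coe_nnreal_ennreal
    rw [lintegral_lintegral_swap hm.aemeasurable]
    calc ∫⁻ ℓ, (∫⁻ ω, (‖dQk k ω ℓ‖₊ : ℝ≥0∞) ∂μ) ∂ν
        = ∫⁻ ℓ, (∫⁻ ω, (‖dQ ω ℓ‖₊ : ℝ≥0∞) ∂μ) ∂ν := by
          exact lintegral_congr fun ℓ => hnrm k ℓ
      _ < ⊤ := hKdQ
  -- integrability of the estimator integrand on the product space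
  have hgm : ∀ k : Fin N, Measurable fun q : Ω × ℝ =>
      (if q.2 ≤ Lk k q.1 then dQk k q.1 q.2 / p q.2 else 0 : ℝ) := by
    intro k
    exact Measurable.ite (measurableSet_le measurable_snd ((hLkm k).comp measurable_fst))
      ((hkm k).div (hpm.comp measurable_snd)) measurable_const
  have hintg : ∀ k : Fin N, Integrable
      (fun q : Ω × ℝ => (if q.2 ≤ Lk k q.1 then dQk k q.1 q.2 / p q.2 else 0 : ℝ))
      (μ.prod ν) := by
    intro k
    refine ⟨(hgm k).aestronglyMeasurable, ?_⟩
    show (∫⁻ q : Ω × ℝ, (‖(if q.2 ≤ Lk k q.1 then dQk k q.1 q.2 / p q.2 else 0 : ℝ)‖₊ : ℝ≥0∞)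
      ∂(μ.prod ν)) < ⊤
    rw [lintegral_prod _ ((hgm k).nnnorm.coe_nnreal_ennreal.aemeasurable)]
    set C : ℝ≥0∞ := ENNReal.ofReal (p Lmax)⁻¹ with hCdef
    have hCne : C ≠ ⊤ := ENNReal.ofReal_ne_top
    have hbound : ∀ ω, ∫⁻ ℓ, (‖(if ℓ ≤ Lk k ω then dQk k ω ℓ / p ℓ else 0 : ℝ)‖₊ : ℝ≥0∞) ∂ν
        ≤ C * ∫⁻ ℓ, (‖dQk k ω ℓ‖₊ : ℝ≥0∞) ∂ν := by
      intro ω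
      rw [← lintegral_const_mul' _ _ hCne]
      refine lintegral_mono_ae ?_
      filter_upwards [ae_restrict_mem measurableSet_Ioc] with ℓ hℓ
      by_cases h : ℓ ≤ Lk k ω
      · simp only [h, if_true]
        rw [← enorm_eq_nnnorm, ← ofReal_norm, ← enorm_eq_nnnorm, ← ofReal_norm, hCdef,
          ← ENNReal.ofReal_mul (by positivity)]
        apply ENNReal.ofReal_le_ofReal
        rw [norm_div, Real.norm_eq_abs (p ℓ), abs_of_pos (hppos ℓ hℓ)]
        rw [div_eq_inv_mul]
        exact mul_le_mul_of_nonneg_right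
          (inv_anti₀ hc (hcle ℓ hℓ)) (norm_nonneg _)
      · simp [h]
    calc ∫⁻ ω, ∫⁻ ℓ, (‖(if ℓ ≤ Lk k ω then dQk k ω ℓ / p ℓ else 0 : ℝ)‖₊ : ℝ≥0∞) ∂ν ∂μ
        ≤ ∫⁻ ω, C * ∫⁻ ℓ, (‖dQk k ω ℓ‖₊ : ℝ≥0∞) ∂ν ∂μ := lintegral_mono hbound
      _ = C * ∫⁻ ω, ∫⁻ ℓ, (‖dQk k ω ℓ‖₊ : ℝ≥0∞) ∂ν ∂μ := lintegral_const_mul' _ _ hCne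
      _ < ⊤ := ENNReal.mul_lt_top hCne.lt_top (hKk k)
  have hintdQ : Integrable (fun q : Ω × ℝ => dQ q.1 q.2) (μ.prod ν) := by
    refine ⟨hdQm.aestronglyMeasurable, ?_⟩
    show (∫⁻ q : Ω × ℝ, (‖dQ q.1 q.2‖₊ : ℝ≥0∞) ∂(μ.prod ν)) < ⊤
    rw [lintegral_prod _ hdQnm.aemeasurable]
    exact hint
  -- rewrite the indicator integrand into an `if` form
  have heq : ∀ (l : ℝ) (f : ℝ → ℝ),
      ∫ ℓ in Set.Ioc (0 : ℝ) Lmax, (Set.Icc 0 l).indicator f ℓ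
        = ∫ ℓ in Set.Ioc (0 : ℝ) Lmax, (if ℓ ≤ l then f ℓ else 0) := by
    intro l f
    refine setIntegral_congr_fun measurableSet_Ioc fun ℓ hℓ => ?_
    simp [Set.indicator_apply, Set.mem_Icc, hℓ.1.le]
  -- expectation of one sample term
  have hEFk : ∀ k : Fin N,
      ∫ ω, (∫ ℓ, (if ℓ ≤ Lk k ω then dQk k ω ℓ / p ℓ else 0 : ℝ) ∂ν) ∂μ
        = ∫ ℓ, (∫ ω, (if ℓ ≤ L ω then dQ ω ℓ / p ℓ else 0 : ℝ) ∂μ) ∂ν := by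
    intro k
    rw [integral_integral_swap (hintg k)]
    refine integral_congr_ae (ae_of_all _ fun ℓ => ?_)
    have hu : Measurable fun x : ℝ × ℝ => (if ℓ ≤ x.2 then x.1 / p ℓ else 0 : ℝ) :=
      Measurable.ite (measurableSet_le measurable_const measurable_snd)
        (measurable_fst.div_const _) measurable_const
    exact ((hev k ℓ).comp hu).integral_eq
  -- the key independence computation, a.e. in ℓ
  have hT : ∫ ℓ, (∫ ω, (if ℓ ≤ L ω then dQ ω ℓ / p ℓ else 0 : ℝ) ∂μ) ∂ν
      = ∫ ℓ, (∫ ω, dQ ω ℓ ∂μ) ∂ν := by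
    have hmeasℓ : Measurable fun ℓ => ∫⁻ ω, (‖dQ ω ℓ‖₊ : ℝ≥0∞) ∂μ :=
      hdQnm.lintegral_prod_left'
    have hfin : ∀ᵐ ℓ ∂ν, ∫⁻ ω, (‖dQ ω ℓ‖₊ : ℝ≥0∞) ∂μ < ⊤ :=
      ae_lt_top hmeasℓ hKdQ.ne
    refine integral_congr_ae ?_
    filter_upwards [hfin, ae_restrict_mem measurableSet_Ioc] with ℓ hℓfin hℓmem
    have hXm : Measurable fun ω => dQ ω ℓ :=
      hdQm.comp (measurable_id.prodMk measurable_const)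
    have hXint : Integrable (fun ω => dQ ω ℓ) μ :=
      ⟨hXm.aestronglyMeasurable, hℓfin⟩
    have hYm : Measurable fun ω => (if ℓ ≤ L ω then (1 : ℝ) else 0) :=
      Measurable.ite (hμL ℓ) measurable_const measurable_const
    have hind : IndepFun (fun ω => dQ ω ℓ) (fun ω => (if ℓ ≤ L ω then (1 : ℝ) else 0)) μ :=
      hindep.comp ((measurable_pi_apply ℓ).comp measurable_snd)
        (Measurable.ite (measurableSet_le measurable_const measurable_id)
          measurable_const measurable_const)
    have hY : ∫ ω, (if ℓ ≤ L ω then (1 : ℝ) else 0) ∂μ = p ℓ := by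
      have : (fun ω => (if ℓ ≤ L ω then (1 : ℝ) else 0))
          = Set.indicator {ω | ℓ ≤ L ω} (fun _ => (1 : ℝ)) := by
        funext ω; simp [Set.indicator_apply]
      rw [this]
      exact integral_indicator_one (hμL ℓ)
    have hrw : (fun ω => (if ℓ ≤ L ω then dQ ω ℓ / p ℓ else 0 : ℝ))
        = fun ω => (p ℓ)⁻¹ * (dQ ω ℓ * (if ℓ ≤ L ω then (1 : ℝ) else 0)) := by
      funext ω
      by_cases h : ℓ ≤ L ω <;> simp [h, div_eq_inv_mul]
    rw [hrw, integral_const_mul,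
      hind.integral_fun_mul_eq_mul_integral hXm.aestronglyMeasurable hYm.aestronglyMeasurable, hY]
    field_simp [(hppos ℓ hℓmem).ne']
  -- Fubini and the fundamental theorem of calculus hypothesis
  have hback : ∫ ℓ, (∫ ω, dQ ω ℓ ∂μ) ∂ν = ∫ ω, (Q ω Lmax - Q ω 0) ∂μ := by
    rw [← integral_integral_swap hintdQ]
    exact integral_congr_ae (hW11.mono fun ω h => h.2.symm)
  -- assemble
  have hFkint : ∀ k : Fin N, Integrable (fun ω => ∫ ℓ in Set.Ioc (0 : ℝ) Lmax,
      (Set.Icc 0 (Lk k ω)).indicator (fun ℓ' => dQk k ω ℓ' / p ℓ') ℓ) μ := by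
    intro k
    refine ((hintg k).integral_prod_left).congr (ae_of_all _ fun ω => ?_)
    exact (heq (Lk k ω) (fun ℓ' => dQk k ω ℓ' / p ℓ')).symm
  have hval : ∀ k : Fin N, ∫ ω, (∫ ℓ in Set.Ioc (0 : ℝ) Lmax,
      (Set.Icc 0 (Lk k ω)).indicator (fun ℓ' => dQk k ω ℓ' / p ℓ') ℓ) ∂μ
        = ∫ ω, (Q ω Lmax - Q ω 0) ∂μ := by
    intro k
    have : ∫ ω, (∫ ℓ in Set.Ioc (0 : ℝ) Lmax,
        (Set.Icc 0 (Lk k ω)).indicator (fun ℓ' => dQk k ω ℓ' / p ℓ') ℓ) ∂μ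
        = ∫ ω, (∫ ℓ, (if ℓ ≤ Lk k ω then dQk k ω ℓ / p ℓ else 0 : ℝ) ∂ν) ∂μ :=
      integral_congr_ae (ae_of_all _ fun ω => heq (Lk k ω) _)
    rw [this, hEFk k, hT, hback]
  rw [integral_const_mul, integral_finset_sum _ fun k _ => hFkint k]
  have : ∀ k : Fin N, k ∈ Finset.univ → ∫ ω, (∫ ℓ in Set.Ioc (0 : ℝ) Lmax,
      (Set.Icc 0 (Lk k ω)).indicator (fun ℓ' => dQk k ω ℓ' / p ℓ') ℓ) ∂μ
        = ∫ ω, (Q ω Lmax - Q ω 0) ∂μ := fun k _ => hval k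
  rw [Finset.sum_congr rfl this, Finset.sum_const, Finset.card_univ, Fintype.card_fin,
    nsmul_eq_mul]
  rw [← mul_assoc, inv_mul_cancel₀ (by exact_mod_cast hN.ne'), one_mul]
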